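/- (The most reliable path can be solved via the generalized Bellman–Ford algorithm.) For all vertices u, v : V, the (max, ×) Bellman–Ford iterates are entrywise monotone nondecreasing in t and converge to the most-reliable-path value, i.e., ⨆_{t : ℕ} (R_t u v) = ⨆_{k : ℕ} ⨆ over all walks p of length k from u to v of ∏_{i=0}^{k-1} w (p i) (p (i+1)) (the supremum over all walks of any length of the product of edge probabilities along the walk, with the empty product for k = 0 equal to 1). -/

import Mathlib

open ENNReal

/-- The (max, ×) generalized Bellman–Ford iterates for most reliable path:
`R 0 u v = if u = v then 1 else 0` and
`R (t+1) u v = max (⨆ x, R t u x * w x v) (R 0 u v)`. -/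
noncomputable def maxProdBF {V : Type*} [Fintype V] [DecidableEq V]
    (w : Matrix V V ℝ≥0∞) : ℕ → V → V → ℝ≥0∞
  | 0 => fun u v => if u = v then 1 else 0
  | t + 1 => fun u v =>
      max (⨆ x : V, maxProdBF w t u x * w x v) (if u = v then 1 else 0)

noncomputable def mrpVal {V : Type*} [Fintype V] [DecidableEq V]
    (w : Matrix V V ℝ≥0∞) (u v : V) : ℝ≥0∞ :=
  ⨆ k : ℕ, ⨆ p : {p : Fin (k + 1) → V // p 0 = u ∧ p (Fin.last k) = v},
    ∏ i : Fin k, w (p.1 i.castSucc) (p.1 i.succ)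

lemma maxProdBF_le_succ {V : Type*} [Fintype V] [DecidableEq V]
    (w : Matrix V V ℝ≥0∞) : ∀ t u v, maxProdBF w t u v ≤ maxProdBF w (t + 1) u v := by
  intro t
  induction t with
  | zero => intro u v; exact le_max_right _ _
  | succ t ih =>
      intro u v
      refine max_le_max ?_ le_rfl
      exact iSup_mono fun x => mul_le_mul_left (ih u x) _

lemma walk_le_maxProdBF {V : Type*} [Fintype V] [DecidableEq V]
    (w : Matrix V V ℝ≥0∞) :
    ∀ k u v (p : Fin (k + 1) → V), p 0 = u → p (Fin.last k) = v →
      (∏ i : Fin k, w (p i.castSucc) (p i.succ)) ≤ maxProdBF w k u v := by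
  intro k
  induction k with
  | zero =>
      intro u v p h0 h1
      have : u = v := by rw [← h0, ← h1]; rfl
      simp [maxProdBF, this]
  | succ k ih =>
      intro u v p h0 h1
      set q : Fin (k + 1) → V := fun j => p j.castSucc with hq
      have hq0 : q 0 = u := by simpa [hq] using h0
      have e1 : (∏ i : Fin k, w (q i.castSucc) (q i.succ))
          = ∏ i : Fin k, w (p (i.castSucc).castSucc) (p (i.castSucc).succ) :=
        Finset.prod_congr rfl fun i _ => rfl
      have e2 : w (p (Fin.last k).castSucc) (p (Fin.last k).succ) = w (q (Fin.last k)) v := by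
        rw [hq, Fin.succ_last, h1]
      have key : (∏ i : Fin (k + 1), w (p i.castSucc) (p i.succ))
          = (∏ i : Fin k, w (q i.castSucc) (q i.succ)) * w (q (Fin.last k)) v := by
        rw [Fin.prod_univ_castSucc, e1, e2]
      rw [key]
      calc (∏ i : Fin k, w (q i.castSucc) (q i.succ)) * w (q (Fin.last k)) v
          ≤ maxProdBF w k u (q (Fin.last k)) * w (q (Fin.last k)) v :=
            mul_le_mul_left (ih u (q (Fin.last k)) q hq0 rfl) _
        _ ≤ ⨆ x : V, maxProdBF w k u x * w x v :=
            le_iSup (fun x => maxProdBF w k u x * w x v) _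
        _ ≤ maxProdBF w (k + 1) u v := le_max_left _ _

lemma maxProdBF_le_mrpVal {V : Type*} [Fintype V] [DecidableEq V]
    (w : Matrix V V ℝ≥0∞) :
    ∀ t u v, maxProdBF w t u v ≤ mrpVal w u v := by
  have base : ∀ u v : V, (if u = v then (1:ℝ≥0∞) else 0) ≤ mrpVal w u v := by
    intro u v
    by_cases h : u = v
    · subst h
      exact le_iSup_of_le 0 (le_iSup_of_le ⟨fun _ => u, rfl, rfl⟩ (by simp))
    · simp [h]
  intro t
  induction t with
  | zero => intro u v; exact base u v
  | succ t ih =>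
      intro u v
      refine max_le ?_ (base u v)
      refine iSup_le fun x => ?_
      calc maxProdBF w t u x * w x v ≤ mrpVal w u x * w x v := mul_le_mul_left (ih u x) _
        _ ≤ mrpVal w u v := by
            rw [mrpVal, ENNReal.iSup_mul]
            refine iSup_le fun k => ?_
            rw [ENNReal.iSup_mul]
            refine iSup_le fun p => ?_
            obtain ⟨p, hp0, hpl⟩ := p
            set r : Fin (k + 2) → V := Fin.snoc p v with hr
            refine le_iSup_of_le (k + 1) (le_iSup_of_le (⟨r, by
              rw [hr, show (0 : Fin (k + 2)) = Fin.castSucc 0 from rfl, Fin.snoc_castSucc]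
              exact hp0, by rw [hr]; simp⟩ :
              {q : Fin (k + 2) → V // q 0 = u ∧ q (Fin.last (k+1)) = v}) (le_of_eq ?_))
            rw [Fin.prod_univ_castSucc]
            have e1 : ∀ i : Fin k,
                w (r (i.castSucc).castSucc) (r (i.castSucc).succ)
                = w (p i.castSucc) (p i.succ) := by
              intro i
              rw [hr, Fin.succ_castSucc, Fin.snoc_castSucc, Fin.snoc_castSucc]
            have e2 : w (r (Fin.last k).castSucc) (r (Fin.last k).succ)
                = w x v := by
              rw [hr, Fin.succ_last, Fin.snoc_castSucc, Fin.snoc_last, hpl]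
            simp only [e1, e2]


theorem maxProdBF_monotone_and_iSup_eq_most_reliable_path {V : Type*} [Fintype V] [DecidableEq V]
    (w : Matrix V V ℝ≥0∞) (hw : ∀ x y : V, w x y ≤ 1) (u v : V) :
    Monotone (fun t : ℕ => maxProdBF w t u v) ∧
      (⨆ t : ℕ, maxProdBF w t u v) =
        ⨆ k : ℕ, ⨆ p : {p : Fin (k + 1) → V // p 0 = u ∧ p (Fin.last k) = v},
          ∏ i : Fin k, w (p.1 i.castSucc) (p.1 i.succ) := by
  constructor
  · exact monotone_nat_of_le_succ fun t => maxProdBF_le_succ w t u v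
  · apply le_antisymm
    · exact iSup_le fun t => maxProdBF_le_mrpVal w t u v
    · refine iSup_le fun k => iSup_le fun p => ?_
      exact le_trans (walk_le_maxProdBF w k u v p.1 p.2.1 p.2.2)
        (le_iSup (fun t => maxProdBF w t u v) k)
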